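/- Assume m0, m1, m2 are not collinear. Let x₀ ∈ ℝ² with x₀ ∉ {m0, m1, m2}, and suppose there is no pair of distinct indices j, k ∈ {0,1,2} such that x₀ lies on the affine line through m_j and m_k outside the closed segment joining m_j and m_k. Then there exists an open neighborhood W of τ₂(x₀) in ℝ² with W ⊆ τ₂(ℝ²); i.e., the image of the TDOA map is locally all of the τ-plane around τ₂(x₀). -/

import Mathlib

open RealInnerProductSpace Module

noncomputable def tau2 (m0 m1 m2 : EuclideanSpace ℝ (Fin 2)) (x : EuclideanSpace ℝ (Fin 2)) :
    ℝ × ℝ :=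
  (‖x - m1‖ - ‖x - m0‖, ‖x - m2‖ - ‖x - m0‖)

private lemma tdoa_hasStrictFDerivAt_norm_sub (p x0 : EuclideanSpace ℝ (Fin 2)) (h : x0 ≠ p) :
    HasStrictFDerivAt (fun x => ‖x - p‖) (innerSL ℝ (‖x0 - p‖⁻¹ • (x0 - p))) x0 := by
  have hne : x0 - p ≠ 0 := sub_ne_zero.mpr h
  have h0 : ‖x0 - p‖ ≠ 0 := norm_ne_zero_iff.mpr hne
  have hsq : HasStrictFDerivAt (fun x : EuclideanSpace ℝ (Fin 2) => ‖x - p‖ ^ 2)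
      ((2 • innerSL ℝ (x0 - p)).comp (ContinuousLinearMap.id ℝ (EuclideanSpace ℝ (Fin 2)))) x0 :=
    (hasStrictFDerivAt_norm_sq (x0 - p)).comp x0 ((hasStrictFDerivAt_id x0).sub_const p)
  have h2 : (‖x0 - p‖ ^ 2 : ℝ) ≠ 0 := pow_ne_zero 2 h0
  have hs := hsq.sqrt h2
  have heq : (fun x : EuclideanSpace ℝ (Fin 2) => Real.sqrt (‖x - p‖ ^ 2)) =
      fun x : EuclideanSpace ℝ (Fin 2) => ‖x - p‖ :=
    funext fun x => Real.sqrt_sq (norm_nonneg _)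
  rw [heq] at hs
  refine hs.congr_fderiv ?_
  symm
  refine ContinuousLinearMap.ext fun v => ?_
  rw [Real.sqrt_sq (norm_nonneg _)]
  simp [real_inner_smul_left]
  field_simp

private lemma tdoa_dir_eq_span_segment (p q x : EuclideanSpace ℝ (Fin 2))
    (hxp : x ≠ p) (hxq : x ≠ q) (hpq : p ≠ q)
    (h : ‖x - p‖⁻¹ • (x - p) = ‖x - q‖⁻¹ • (x - q)) :
    x ∈ affineSpan ℝ ({p, q} : Set (EuclideanSpace ℝ (Fin 2))) ∧ x ∉ segment ℝ p q := by
  have hnp : ‖x - p‖ ≠ 0 := norm_ne_zero_iff.mpr (sub_ne_zero.mpr hxp)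
  have hnq : ‖x - q‖ ≠ 0 := norm_ne_zero_iff.mpr (sub_ne_zero.mpr hxq)
  set t : ℝ := ‖x - p‖ * ‖x - q‖⁻¹ with ht
  have htpos : 0 < t := by
    have h1 : 0 < ‖x - p‖ := lt_of_le_of_ne (norm_nonneg _) (Ne.symm hnp)
    have h2 : 0 < ‖x - q‖ := lt_of_le_of_ne (norm_nonneg _) (Ne.symm hnq)
    positivity
  have hxt : x - p = t • (x - q) := by
    have := congrArg (fun y : EuclideanSpace ℝ (Fin 2) => ‖x - p‖ • y) h
    simpa [smul_smul, mul_inv_cancel₀ hnp] using this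
  have ht1 : t ≠ 1 := by
    intro h1
    rw [h1, one_smul] at hxt
    exact hpq (sub_right_injective hxt)
  have h1t : (1 : ℝ) - t ≠ 0 := sub_ne_zero.mpr (Ne.symm ht1)
  have key : (1 - t) • (x - p) = t • (p - q) := by
    have h5 : (1 - t) • (x - p) = (x - p) - t • (x - p) := by module
    rw [h5]
    nth_rewrite 1 [hxt]
    module
  have hx_p : x - p = ((1 - t)⁻¹ * t) • (p - q) := by
    have h2 := congrArg (fun y : EuclideanSpace ℝ (Fin 2) => (1 - t)⁻¹ • y) key
    simpa only [smul_smul, inv_mul_cancel₀ h1t, one_smul] using h2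
  constructor
  · have hmem : AffineMap.lineMap p q (-((1 - t)⁻¹ * t)) = x := by
      rw [AffineMap.lineMap_apply_module']
      have hswap : (-((1 - t)⁻¹ * t)) • (q - p) + p = ((1 - t)⁻¹ * t) • (p - q) + p := by
        module
      rw [hswap, ← hx_p, sub_add_cancel]
    exact hmem ▸ AffineMap.lineMap_mem_affineSpan_pair _ p q
  · rintro ⟨a, b, ha, hb, hab, habx⟩
    have h1 : x - p = b • (q - p) := by
      rw [← habx, show a = 1 - b by linarith]
      module
    have h2 : x - q = a • (p - q) := by
      rw [← habx, show b = 1 - a by linarith]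
      module
    rw [h1, h2, smul_smul] at hxt
    have hz : (b + t * a) • (q - p) = 0 := by
      rw [add_smul, hxt]
      module
    rcases smul_eq_zero.mp hz with hz0 | hz0
    · have h3 : 0 ≤ t * a := mul_nonneg htpos.le ha
      have hb0 : b = 0 := by linarith
      have h4 : t * a = 0 := by linarith
      have ha0 : a = 0 := by
        rcases mul_eq_zero.mp h4 with h | h
        · exact absurd h (ne_of_gt htpos)
        · exact h
      linarith
    · exact hpq (sub_eq_zero.mp hz0).symm

private lemma tdoa_exists_eq_of_kernel (u0 u1 u2 : EuclideanSpace ℝ (Fin 2))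
    (h0 : ‖u0‖ = 1) (h1 : ‖u1‖ = 1) (h2 : ‖u2‖ = 1)
    (v : EuclideanSpace ℝ (Fin 2)) (hv : v ≠ 0)
    (hi1 : ⟪u1 - u0, v⟫ = 0) (hi2 : ⟪u2 - u0, v⟫ = 0) :
    u1 = u0 ∨ u2 = u0 ∨ u1 = u2 := by
  set K := (ℝ ∙ v)ᗮ with hKdef
  have hK1 : finrank ℝ K = 1 := by
    have hsv : finrank ℝ (ℝ ∙ v) = 1 := finrank_span_singleton hv
    have hsum := Submodule.finrank_add_finrank_orthogonal (𝕜 := ℝ) (K := ℝ ∙ v)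
    rw [hsv, finrank_euclideanSpace] at hsum
    simp only [Fintype.card_fin] at hsum
    rw [hKdef]
    omega
  obtain ⟨w0, hw0, hgen⟩ := finrank_eq_one_iff'.mp hK1
  have m1 : u1 - u0 ∈ K := Submodule.mem_orthogonal_singleton_iff_inner_left.mpr hi1
  have m2 : u2 - u0 ∈ K := Submodule.mem_orthogonal_singleton_iff_inner_left.mpr hi2
  obtain ⟨a, ha⟩ := hgen ⟨u1 - u0, m1⟩
  obtain ⟨b, hb⟩ := hgen ⟨u2 - u0, m2⟩
  set w : EuclideanSpace ℝ (Fin 2) := (w0 : EuclideanSpace ℝ (Fin 2)) with hwdef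
  have hw : w ≠ 0 := fun hh => hw0 (by simpa [hwdef] using Subtype.ext hh)
  have ha' : u1 - u0 = a • w := by
    have := congrArg Subtype.val ha
    simpa [hwdef] using this.symm
  have hb' : u2 - u0 = b • w := by
    have := congrArg Subtype.val hb
    simpa [hwdef] using this.symm
  have claim : ∀ c : ℝ, ‖u0 + c • w‖ = 1 → c * (2 * ⟪u0, w⟫ + c * ‖w‖ ^ 2) = 0 := by
    intro c hc
    have hexp := norm_add_sq_real u0 (c • w)
    rw [hc, h0, real_inner_smul_right, norm_smul, Real.norm_eq_abs, mul_pow, sq_abs] at hexp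
    linear_combination -hexp
  have hu1 : u0 + a • w = u1 := by rw [← ha']; abel
  have hu2 : u0 + b • w = u2 := by rw [← hb']; abel
  have hca := claim a (by rw [hu1]; exact h1)
  have hcb := claim b (by rw [hu2]; exact h2)
  rcases mul_eq_zero.mp hca with hA | hA
  · left
    rw [← hu1, hA, zero_smul, add_zero]
  rcases mul_eq_zero.mp hcb with hB | hB
  · right; left
    rw [← hu2, hB, zero_smul, add_zero]
  · right; right
    have hwpos : (0:ℝ) < ‖w‖ := norm_pos_iff.mpr hw
    have hwsq : (0:ℝ) < ‖w‖ ^ 2 := by positivity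
    have hab : a = b := by
      have : a * ‖w‖ ^ 2 = b * ‖w‖ ^ 2 := by linarith
      exact mul_right_cancel₀ (ne_of_gt hwsq) this
    rw [← hu1, ← hu2, hab]

private lemma tdoa_coll_of_pair_eq (m0 m1 m2 : EuclideanSpace ℝ (Fin 2))
    (h : m0 = m1 ∨ m0 = m2 ∨ m1 = m2) :
    Collinear ℝ ({m0, m1, m2} : Set (EuclideanSpace ℝ (Fin 2))) := by
  rcases h with h | h | h
  · have he : ({m0, m1, m2} : Set (EuclideanSpace ℝ (Fin 2))) = {m1, m2} := by
      rw [h]; ext y; simp only [Set.mem_insert_iff, Set.mem_singleton_iff]; tauto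
    rw [he]; exact collinear_pair ℝ _ _
  · have he : ({m0, m1, m2} : Set (EuclideanSpace ℝ (Fin 2))) = {m2, m1} := by
      rw [h]; ext y; simp only [Set.mem_insert_iff, Set.mem_singleton_iff]; tauto
    rw [he]; exact collinear_pair ℝ _ _
  · have he : ({m0, m1, m2} : Set (EuclideanSpace ℝ (Fin 2))) = {m0, m2} := by
      rw [h]; ext y; simp only [Set.mem_insert_iff, Set.mem_singleton_iff]; tauto
    rw [he]; exact collinear_pair ℝ _ _

theorem stmt5 (m0 m1 m2 : EuclideanSpace ℝ (Fin 2))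
    (hnc : ¬ Collinear ℝ ({m0, m1, m2} : Set (EuclideanSpace ℝ (Fin 2))))
    (x0 : EuclideanSpace ℝ (Fin 2))
    (hx0 : x0 ∉ ({m0, m1, m2} : Set (EuclideanSpace ℝ (Fin 2))))
    (hreg : ¬ ∃ j k : Fin 3, j ≠ k ∧
        x0 ∈ affineSpan ℝ ({![m0, m1, m2] j, ![m0, m1, m2] k} : Set (EuclideanSpace ℝ (Fin 2))) ∧
        x0 ∉ segment ℝ (![m0, m1, m2] j) (![m0, m1, m2] k)) :
    ∃ W : Set (ℝ × ℝ), IsOpen W ∧ tau2 m0 m1 m2 x0 ∈ W ∧ W ⊆ Set.range (tau2 m0 m1 m2) := by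
  classical
  simp only [Set.mem_insert_iff, Set.mem_singleton_iff, not_or] at hx0
  obtain ⟨hx00, hx01, hx02⟩ := hx0
  set u0 : EuclideanSpace ℝ (Fin 2) := ‖x0 - m0‖⁻¹ • (x0 - m0) with hu0
  set u1 : EuclideanSpace ℝ (Fin 2) := ‖x0 - m1‖⁻¹ • (x0 - m1) with hu1
  set u2 : EuclideanSpace ℝ (Fin 2) := ‖x0 - m2‖⁻¹ • (x0 - m2) with hu2
  have hne0 : ‖x0 - m0‖ ≠ 0 := norm_ne_zero_iff.mpr (sub_ne_zero.mpr hx00)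
  have hne1 : ‖x0 - m1‖ ≠ 0 := norm_ne_zero_iff.mpr (sub_ne_zero.mpr hx01)
  have hne2 : ‖x0 - m2‖ ≠ 0 := norm_ne_zero_iff.mpr (sub_ne_zero.mpr hx02)
  have hn0 : ‖u0‖ = 1 := by rw [hu0, norm_smul, norm_inv, norm_norm, inv_mul_cancel₀ hne0]
  have hn1 : ‖u1‖ = 1 := by rw [hu1, norm_smul, norm_inv, norm_norm, inv_mul_cancel₀ hne1]
  have hn2 : ‖u2‖ = 1 := by rw [hu2, norm_smul, norm_inv, norm_norm, inv_mul_cancel₀ hne2]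
  have hd0 := tdoa_hasStrictFDerivAt_norm_sub m0 x0 hx00
  have hd1 := tdoa_hasStrictFDerivAt_norm_sub m1 x0 hx01
  have hd2 := tdoa_hasStrictFDerivAt_norm_sub m2 x0 hx02
  have hL1 : HasStrictFDerivAt (fun x => ‖x - m1‖ - ‖x - m0‖) (innerSL ℝ (u1 - u0)) x0 := by
    rw [map_sub]
    exact hd1.sub hd0
  have hL2 : HasStrictFDerivAt (fun x => ‖x - m2‖ - ‖x - m0‖) (innerSL ℝ (u2 - u0)) x0 := by
    rw [map_sub]
    exact hd2.sub hd0
  set L : EuclideanSpace ℝ (Fin 2) →L[ℝ] ℝ × ℝ :=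
    (innerSL ℝ (u1 - u0)).prod (innerSL ℝ (u2 - u0)) with hLdef
  have hdf : HasStrictFDerivAt (tau2 m0 m1 m2) L x0 := hL1.prodMk hL2
  have hker : ∀ v : EuclideanSpace ℝ (Fin 2), L v = 0 → v = 0 := by
    intro v hv
    by_contra hv0
    have hc1 : ⟪u1 - u0, v⟫ = 0 := congrArg Prod.fst hv
    have hc2 : ⟪u2 - u0, v⟫ = 0 := congrArg Prod.snd hv
    rcases tdoa_exists_eq_of_kernel u0 u1 u2 hn0 hn1 hn2 v hv0 hc1 hc2 with h | h | h
    · have hm : m1 ≠ m0 := fun he => hnc (tdoa_coll_of_pair_eq m0 m1 m2 (Or.inl he.symm))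
      obtain ⟨hspan, hseg⟩ := tdoa_dir_eq_span_segment m1 m0 x0 hx01 hx00 hm h
      exact hreg ⟨1, 0, by decide, by simpa using hspan, by simpa using hseg⟩
    · have hm : m2 ≠ m0 := fun he => hnc (tdoa_coll_of_pair_eq m0 m1 m2 (Or.inr (Or.inl he.symm)))
      obtain ⟨hspan, hseg⟩ := tdoa_dir_eq_span_segment m2 m0 x0 hx02 hx00 hm h
      exact hreg ⟨2, 0, by decide, by simpa using hspan, by simpa using hseg⟩
    · have hm : m1 ≠ m2 := fun he => hnc (tdoa_coll_of_pair_eq m0 m1 m2 (Or.inr (Or.inr he)))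
      obtain ⟨hspan, hseg⟩ := tdoa_dir_eq_span_segment m1 m2 x0 hx01 hx02 hm h
      exact hreg ⟨1, 2, by decide, by simpa using hspan, by simpa using hseg⟩
  have hinj : Function.Injective L := by
    intro a b hab
    have hz : L (a - b) = 0 := by rw [map_sub, hab, sub_self]
    exact sub_eq_zero.mp (hker _ hz)
  have hfr : finrank ℝ (EuclideanSpace ℝ (Fin 2)) = finrank ℝ (ℝ × ℝ) := by
    simp [finrank_euclideanSpace]
  let eL : EuclideanSpace ℝ (Fin 2) ≃ₗ[ℝ] ℝ × ℝ :=
    LinearMap.linearEquivOfInjective L.toLinearMap hinj hfr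
  let eC : EuclideanSpace ℝ (Fin 2) ≃L[ℝ] ℝ × ℝ := eL.toContinuousLinearEquiv
  have hcoe : (eC : EuclideanSpace ℝ (Fin 2) →L[ℝ] ℝ × ℝ) = L := by
    ext v
    · simp [eC, eL, LinearMap.linearEquivOfInjective_apply]
    · simp [eC, eL, LinearMap.linearEquivOfInjective_apply]
  have hdf' : HasStrictFDerivAt (tau2 m0 m1 m2)
      ((eC : EuclideanSpace ℝ (Fin 2) →L[ℝ] ℝ × ℝ)) x0 := by
    rw [hcoe]; exact hdf
  have hmap := hdf'.map_nhds_eq_of_equiv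
  have hmem : Set.range (tau2 m0 m1 m2) ∈ nhds (tau2 m0 m1 m2 x0) := by
    rw [← hmap, Filter.mem_map, Set.preimage_range]
    exact Filter.univ_mem
  exact ⟨interior (Set.range (tau2 m0 m1 m2)), isOpen_interior,
    mem_interior_iff_mem_nhds.mpr hmem, interior_subset⟩
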